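/- arXiv:2409.09219 — 4 statements merged into one kernel-verified Lean document; each statement's English description precedes it below -/
import Mathlib

section
/- Let δ, ν, t ≥ 0 be real numbers and k, ℓ integers. Define ζ_m = exp(δ ν^(1/3)(1+|m|^(2/3)) t) for an integer m. Then |ζ_k − ζ_{k−ℓ}| ≤ δ ν^(1/3) |ℓ|^(2/3) t · ζ_{k−ℓ} · ζ_ℓ. -/
open Real

lemma exp_sub_one_le_mul_exp {x : ℝ} (hx : 0 ≤ x) : Real.exp x - 1 ≤ x * Real.exp x := by
  have h1 := Real.add_one_le_exp (-x)
  have h2 := Real.exp_pos x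
  have h3 : Real.exp (-x) * Real.exp x = 1 := by
    rw [← Real.exp_add]; simp
  nlinarith

lemma exp_diff_abs_le {a b d : ℝ} (hd : 0 ≤ d) (h1 : a - b ≤ d) (h2 : b - a ≤ d) :
    |Real.exp a - Real.exp b| ≤ d * Real.exp b * Real.exp d := by
  rcases le_total a b with h | h
  · rw [abs_sub_comm, abs_of_nonneg (by simp [Real.exp_le_exp, h])]
    have key : Real.exp b - Real.exp a = Real.exp a * (Real.exp (b - a) - 1) := by
      rw [mul_sub, ← Real.exp_add]; ring_nf
    rw [key]
    have h4 : Real.exp (b - a) - 1 ≤ (b - a) * Real.exp (b - a) :=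
      exp_sub_one_le_mul_exp (by linarith)
    have h5 : Real.exp a * (Real.exp (b - a) - 1) ≤ Real.exp a * ((b - a) * Real.exp (b - a)) :=
      mul_le_mul_of_nonneg_left h4 (Real.exp_pos a).le
    have h6 : Real.exp a * ((b - a) * Real.exp (b - a)) = (b - a) * Real.exp b := by
      rw [show Real.exp a * ((b - a) * Real.exp (b - a)) =
        (b - a) * (Real.exp a * Real.exp (b - a)) from by ring, ← Real.exp_add]; ring_nf
    calc Real.exp a * (Real.exp (b - a) - 1) ≤ (b - a) * Real.exp b := by rw [← h6]; exact h5
      _ ≤ d * Real.exp b := mul_le_mul_of_nonneg_right h2 (Real.exp_pos b).le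
      _ ≤ d * Real.exp b * Real.exp d := by
          nlinarith [Real.one_le_exp hd, Real.exp_pos b, mul_nonneg hd (Real.exp_pos b).le]
  · rw [abs_of_nonneg (by simp [Real.exp_le_exp, h])]
    have key : Real.exp a - Real.exp b = Real.exp b * (Real.exp (a - b) - 1) := by
      rw [mul_sub, ← Real.exp_add]; ring_nf
    rw [key]
    have h4 : Real.exp (a - b) - 1 ≤ (a - b) * Real.exp (a - b) :=
      exp_sub_one_le_mul_exp (by linarith)
    have h5 : Real.exp b * (Real.exp (a - b) - 1) ≤ Real.exp b * ((a - b) * Real.exp (a - b)) :=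
      mul_le_mul_of_nonneg_left h4 (Real.exp_pos b).le
    calc Real.exp b * (Real.exp (a - b) - 1)
        ≤ Real.exp b * ((a - b) * Real.exp (a - b)) := h5
      _ ≤ Real.exp b * (d * Real.exp d) := by
          apply mul_le_mul_of_nonneg_left _ (Real.exp_pos b).le
          apply mul_le_mul h1 (Real.exp_le_exp.2 h1) (Real.exp_pos _).le hd
      _ = d * Real.exp b * Real.exp d := by ring

lemma abs_rpow_sub_le (x y : ℝ) : |x| ^ ((2:ℝ)/3) - |x - y| ^ ((2:ℝ)/3) ≤ |y| ^ ((2:ℝ)/3) := by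
  have h1 : |x| ≤ |x - y| + |y| := by
    calc |x| = |(x - y) + y| := by ring_nf
      _ ≤ |x - y| + |y| := abs_add_le _ _
  have h2 : |x| ^ ((2:ℝ)/3) ≤ (|x - y| + |y|) ^ ((2:ℝ)/3) :=
    Real.rpow_le_rpow (abs_nonneg x) h1 (by norm_num)
  have h3 : (|x - y| + |y|) ^ ((2:ℝ)/3) ≤ |x - y| ^ ((2:ℝ)/3) + |y| ^ ((2:ℝ)/3) := by
    have h := NNReal.rpow_add_le_add_rpow (Real.toNNReal |x - y|) (Real.toNNReal |y|)
      (by norm_num : (0:ℝ) ≤ 2/3) (by norm_num : (2:ℝ)/3 ≤ 1)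
    have h' := NNReal.coe_le_coe.2 h
    rw [NNReal.coe_add] at h'
    simp only [NNReal.coe_rpow, ← Real.toNNReal_add (abs_nonneg (x-y)) (abs_nonneg y),
      Real.coe_toNNReal _ (add_nonneg (abs_nonneg (x-y)) (abs_nonneg y)),
      Real.coe_toNNReal _ (abs_nonneg (x-y)), Real.coe_toNNReal _ (abs_nonneg y)] at h'
    exact h'
  linarith

theorem zeta_commutator_bound (δ ν t : ℝ) (hδ : 0 ≤ δ) (hν : 0 ≤ ν) (ht : 0 ≤ t) (k ℓ : ℤ) :
    |Real.exp (δ * ν ^ ((1 : ℝ) / 3) * (1 + |(k : ℝ)| ^ ((2 : ℝ) / 3)) * t) -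
        Real.exp (δ * ν ^ ((1 : ℝ) / 3) * (1 + |((k - ℓ : ℤ) : ℝ)| ^ ((2 : ℝ) / 3)) * t)| ≤
      δ * ν ^ ((1 : ℝ) / 3) * |(ℓ : ℝ)| ^ ((2 : ℝ) / 3) * t *
        (Real.exp (δ * ν ^ ((1 : ℝ) / 3) * (1 + |((k - ℓ : ℤ) : ℝ)| ^ ((2 : ℝ) / 3)) * t) *
          Real.exp (δ * ν ^ ((1 : ℝ) / 3) * (1 + |(ℓ : ℝ)| ^ ((2 : ℝ) / 3)) * t)) := by
  set c : ℝ := δ * ν ^ ((1 : ℝ) / 3) * t with hc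
  have hc0 : 0 ≤ c := by
    apply mul_nonneg (mul_nonneg hδ (Real.rpow_nonneg hν _)) ht
  have hL : 0 ≤ |(ℓ : ℝ)| ^ ((2:ℝ)/3) := Real.rpow_nonneg (abs_nonneg _) _
  set a : ℝ := δ * ν ^ ((1 : ℝ) / 3) * (1 + |(k : ℝ)| ^ ((2 : ℝ) / 3)) * t with ha
  set b : ℝ := δ * ν ^ ((1 : ℝ) / 3) * (1 + |((k - ℓ : ℤ) : ℝ)| ^ ((2 : ℝ) / 3)) * t with hb
  set d : ℝ := c * |(ℓ : ℝ)| ^ ((2:ℝ)/3) with hd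
  have hd0 : 0 ≤ d := mul_nonneg hc0 hL
  have hcast : |((k - ℓ : ℤ) : ℝ)| = |(k : ℝ) - (ℓ : ℝ)| := by push_cast; ring_nf
  have key1 : |(k : ℝ)| ^ ((2:ℝ)/3) - |((k - ℓ : ℤ) : ℝ)| ^ ((2:ℝ)/3) ≤ |(ℓ : ℝ)| ^ ((2:ℝ)/3) := by
    rw [hcast]; exact abs_rpow_sub_le _ _
  have key2 : |((k - ℓ : ℤ) : ℝ)| ^ ((2:ℝ)/3) - |(k : ℝ)| ^ ((2:ℝ)/3) ≤ |(ℓ : ℝ)| ^ ((2:ℝ)/3) := by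
    rw [hcast]
    have := abs_rpow_sub_le ((k : ℝ) - (ℓ : ℝ)) (-(ℓ : ℝ))
    simp only [sub_neg_eq_add, sub_add_cancel, abs_neg] at this
    linarith
  have h1 : a - b ≤ d := by
    have : a - b = c * (|(k : ℝ)| ^ ((2:ℝ)/3) - |((k - ℓ : ℤ) : ℝ)| ^ ((2:ℝ)/3)) := by
      rw [ha, hb, hc]; ring
    rw [this, hd]
    exact mul_le_mul_of_nonneg_left key1 hc0
  have h2 : b - a ≤ d := by
    have : b - a = c * (|((k - ℓ : ℤ) : ℝ)| ^ ((2:ℝ)/3) - |(k : ℝ)| ^ ((2:ℝ)/3)) := by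
      rw [ha, hb, hc]; ring
    rw [this, hd]
    exact mul_le_mul_of_nonneg_left key2 hc0
  have main := exp_diff_abs_le hd0 h1 h2
  calc |Real.exp a - Real.exp b| ≤ d * Real.exp b * Real.exp d := main
    _ ≤ δ * ν ^ ((1 : ℝ) / 3) * |(ℓ : ℝ)| ^ ((2 : ℝ) / 3) * t *
        (Real.exp b * Real.exp (δ * ν ^ ((1 : ℝ) / 3) * (1 + |(ℓ : ℝ)| ^ ((2 : ℝ) / 3)) * t)) := by
        have hde : d ≤ δ * ν ^ ((1 : ℝ) / 3) * (1 + |(ℓ : ℝ)| ^ ((2 : ℝ) / 3)) * t := by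
          rw [hd, hc]; nlinarith [mul_nonneg (mul_nonneg hδ (Real.rpow_nonneg hν ((1:ℝ)/3))) ht]
        have heq : d = δ * ν ^ ((1 : ℝ) / 3) * |(ℓ : ℝ)| ^ ((2 : ℝ) / 3) * t := by
          rw [hd, hc]; ring
        rw [← heq, ← mul_assoc]
        exact mul_le_mul_of_nonneg_left (Real.exp_le_exp.2 hde)
          (mul_nonneg hd0 (Real.exp_pos b).le)
end

section
/- Let K ≥ 1, ν ∈ (0,1], and let k be an integer with 0 < |k| ≤ ν^(−1/2). Define W_ν(t,k,η) = π − arctan((ν^(1/3)|k|^(2/3)/K)(t − η/k)). Then for all t, η ∈ ℝ: −(∂_t W_ν / W_ν)(t,k,η) + ν(k² + (η − kt)²) ≥ c ν^(1/3) |k|^(2/3) with c = 2/(9Kπ²). -/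
open Real

private lemma aux_81_le : (81:ℝ) ≤ 9 * Real.pi ^ 2 := by
  nlinarith [Real.pi_gt_three]

set_option maxHeartbeats 1000000 in
theorem enhanced_dissipation_multiplier_lower_bound (K ν : ℝ) (hK : 1 ≤ K) (hν : 0 < ν)
    (hν1 : ν ≤ 1) (k : ℤ) (hk : 0 < |(k : ℝ)|) (hk2 : |(k : ℝ)| ≤ ν ^ (-(1 : ℝ) / 2)) (η : ℝ) :
    ∀ t : ℝ,
      2 / (9 * K * π ^ 2) * (ν ^ ((1 : ℝ) / 3) * |(k : ℝ)| ^ ((2 : ℝ) / 3)) ≤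
        -(deriv (fun s : ℝ =>
              π - Real.arctan (ν ^ ((1 : ℝ) / 3) * |(k : ℝ)| ^ ((2 : ℝ) / 3) / K *
                (s - η / (k : ℝ)))) t) /
            (π - Real.arctan (ν ^ ((1 : ℝ) / 3) * |(k : ℝ)| ^ ((2 : ℝ) / 3) / K *
              (t - η / (k : ℝ)))) +
          ν * ((k : ℝ) ^ 2 + (η - (k : ℝ) * t) ^ 2) := by
  intro t
  have hK0 : (0:ℝ) < K := lt_of_lt_of_le one_pos hK
  have hne : (k:ℝ) ≠ 0 := by
    intro h; rw [h] at hk; simp at hk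
  set c : ℝ := ν ^ ((1 : ℝ) / 3) * |(k : ℝ)| ^ ((2 : ℝ) / 3) with hc
  have hc0 : 0 < c := mul_pos (rpow_pos_of_pos hν _) (rpow_pos_of_pos hk _)
  set a : ℝ := c / K with ha
  have ha0 : 0 < a := div_pos hc0 hK0
  set b : ℝ := η / (k : ℝ) with hb
  set u : ℝ := a * (t - b) with hu
  have hd : HasDerivAt (fun s : ℝ => π - Real.arctan (a * (s - b)))
      (-(a / (1 + u ^ 2))) t := by
    have h1 : HasDerivAt (fun s : ℝ => a * (s - b)) a t := by
      simpa using ((hasDerivAt_id t).sub_const b).const_mul a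
    have h2 := (Real.hasDerivAt_arctan u).comp t h1
    have h3 := (hasDerivAt_const t π).sub h2
    exact h3.congr_deriv (by ring)
  rw [hd.deriv, neg_neg]
  have hW1 : π / 2 < π - Real.arctan u := by
    have := Real.arctan_lt_pi_div_two u
    linarith
  have hW0 : 0 < π - Real.arctan u := lt_trans (by positivity) hW1
  have hW2 : π - Real.arctan u ≤ 3 * π / 2 := by
    have := Real.neg_pi_div_two_lt_arctan u
    linarith
  have hpi : (3:ℝ) < π := pi_gt_three
  have hcube : c ^ 3 = ν * (k : ℝ) ^ 2 := by
    have h1 : (ν ^ ((1:ℝ)/3)) ^ (3:ℕ) = ν := by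
      rw [← Real.rpow_natCast (ν ^ ((1:ℝ)/3)) 3, ← Real.rpow_mul hν.le]
      norm_num
    have h2 : (|(k:ℝ)| ^ ((2:ℝ)/3)) ^ (3:ℕ) = (k:ℝ) ^ 2 := by
      rw [← Real.rpow_natCast (|(k:ℝ)| ^ ((2:ℝ)/3)) 3, ← Real.rpow_mul (abs_nonneg _)]
      norm_num
    rw [hc, mul_pow, h1, h2]
  have hkb : (k:ℝ) * b = η := by
    rw [hb, mul_comm]; exact div_mul_cancel₀ η hne
  have heta : (η - (k:ℝ) * t) ^ 2 = (k:ℝ) ^ 2 * (t - b) ^ 2 := by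
    rw [← hkb]; ring
  have hu2 : u ^ 2 = c ^ 2 * (t - b) ^ 2 / K ^ 2 := by
    rw [hu, ha]; field_simp
  clear_value u b a c
  have hT1 : 0 ≤ a / (1 + u ^ 2) / (π - Real.arctan u) := by positivity
  rcases le_or_gt (u ^ 2) 1 with hcase | hcase
  · -- first term suffices
    have hden : (1 + u ^ 2) * (π - Real.arctan u) ≤ 3 * π := by
      have h1 : 1 + u ^ 2 ≤ 2 := by linarith
      calc (1 + u ^ 2) * (π - Real.arctan u) ≤ 2 * (3 * π / 2) := by
            apply mul_le_mul h1 hW2 hW0.le (by norm_num)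
        _ = 3 * π := by ring
    have hT : a / (3 * π) ≤ a / (1 + u ^ 2) / (π - Real.arctan u) := by
      rw [div_div]
      exact div_le_div_of_nonneg_left ha0.le (by positivity) hden
    have h2 : 2 / (9 * K * π ^ 2) * c ≤ a / (3 * π) := by
      rw [ha, div_div, div_mul_eq_mul_div, div_le_div_iff₀ (by positivity) (by positivity)]
      have h6 : (6:ℝ) * π ≤ 9 * π ^ 2 := by nlinarith [pi_pos]
      have := mul_le_mul_of_nonneg_left h6 (mul_pos hc0 hK0).le
      nlinarith [this]
    have hnn : 0 ≤ ν * ((k : ℝ) ^ 2 + (η - (k : ℝ) * t) ^ 2) := by positivity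
    linarith
  · -- second term suffices
    have hkey : c * K ^ 2 ≤ ν * (η - (k:ℝ) * t) ^ 2 := by
      rw [heta]
      have h1 : K ^ 2 < c ^ 2 * (t - b) ^ 2 := by
        rw [hu2] at hcase
        calc K ^ 2 = 1 * K ^ 2 := by ring
          _ < c ^ 2 * (t - b) ^ 2 / K ^ 2 * K ^ 2 :=
              mul_lt_mul_of_pos_right hcase (by positivity)
          _ = c ^ 2 * (t - b) ^ 2 := by field_simp
      have hrw : ν * ((k:ℝ) ^ 2 * (t - b) ^ 2) = c ^ 3 * (t - b) ^ 2 := by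
        rw [hcube]; ring
      rw [hrw]
      calc c * K ^ 2 ≤ c * (c ^ 2 * (t - b) ^ 2) :=
            mul_le_mul_of_nonneg_left h1.le hc0.le
        _ = c ^ 3 * (t - b) ^ 2 := by ring
    have hK3 : (1:ℝ) ≤ K ^ 3 := one_le_pow₀ hK
    have h9 : (81:ℝ) ≤ 9 * π ^ 2 := aux_81_le
    have h2 : 2 / (9 * K * π ^ 2) * c ≤ c * K ^ 2 := by
      rw [div_mul_eq_mul_div, div_le_iff₀ (by positivity)]
      have hA : c ≤ c * K ^ 3 := by nlinarith [mul_le_mul_of_nonneg_left hK3 hc0.le]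
      calc 2 * c ≤ 81 * c := by linarith
        _ ≤ 9 * π ^ 2 * c := mul_le_mul_of_nonneg_right h9 hc0.le
        _ ≤ 9 * π ^ 2 * (c * K ^ 3) := mul_le_mul_of_nonneg_left hA (by positivity)
        _ = c * K ^ 2 * (9 * K * π ^ 2) := by ring
    have expand : ν * ((k:ℝ) ^ 2 + (η - (k:ℝ) * t) ^ 2) =
        ν * (k:ℝ) ^ 2 + ν * (η - (k:ℝ) * t) ^ 2 := by ring
    rw [expand]
    have hnn : 0 ≤ ν * (k:ℝ) ^ 2 := by positivity
    linarith
end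

section
/- Let K ≥ 1. Let k, ℓ be integers with k(k−ℓ) > 0 and ℓ ≠ 0, let t, η, ξ be real, and define W_I(t,m,ζ) = π − arctan((ζ − mt)/(Km)) for a nonzero integer m. Then |W_I(t,k,η) − W_I(t,k−ℓ,η−ξ)| ≤ C (|ξ − ℓt| + |ℓ|) / min(|k|, |k−ℓ|) for an absolute constant C. -/
open Real

lemma aux_arctan_deriv_bound {K m u l P n : ℝ} (hK1 : 1 ≤ K) (hm0 : 0 < m)
    (hPm : K * m ≤ |P|) :
    |(u * P - n * (K * l)) / (P ^ 2 + n ^ 2)| ≤ (|u| + |l|) / m := by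
  have hK0 : (0:ℝ) < K := lt_of_lt_of_le one_pos hK1
  have hmP : m ≤ |P| := by nlinarith [abs_nonneg P]
  have hP0 : P ≠ 0 := by
    intro h; rw [h, abs_zero] at hmP; linarith
  have hdpos : (0:ℝ) < P ^ 2 + n ^ 2 := by positivity
  rw [abs_div, abs_of_pos hdpos, div_le_div_iff₀ hdpos hm0]
  have htri : |u * P - n * (K * l)| ≤ |u| * |P| + K * |l| * |n| := by
    calc |u * P - n * (K * l)| ≤ |u * P| + |n * (K * l)| := abs_sub _ _
      _ = |u| * |P| + K * |l| * |n| := by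
          rw [abs_mul u P, abs_mul n (K * l), abs_mul K l, abs_of_pos hK0]; ring
  have h5 : |u| * |P| * m ≤ |u| * (P ^ 2 + n ^ 2) := by
    have : |P| * m ≤ P ^ 2 + n ^ 2 := by nlinarith [sq_abs P, sq_nonneg n, abs_nonneg P]
    nlinarith [abs_nonneg u]
  have h6 : K * |l| * |n| * m ≤ |l| * (P ^ 2 + n ^ 2) := by
    have hKn : K * m * |n| ≤ P ^ 2 + n ^ 2 := by
      nlinarith [sq_nonneg (|P| - |n|), sq_abs P, sq_abs n, abs_nonneg n, abs_nonneg P]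
    nlinarith [abs_nonneg l, abs_nonneg n]
  calc |u * P - n * (K * l)| * m ≤ (|u| * |P| + K * |l| * |n|) * m :=
        mul_le_mul_of_nonneg_right htri (le_of_lt hm0)
    _ = |u| * |P| * m + K * |l| * |n| * m := by ring
    _ ≤ |u| * (P ^ 2 + n ^ 2) + |l| * (P ^ 2 + n ^ 2) := add_le_add h5 h6
    _ = (|u| + |l|) * (P ^ 2 + n ^ 2) := by ring

theorem inviscid_multiplier_commutator :
    ∃ C > 0, ∀ (K : ℝ), 1 ≤ K → ∀ (k ℓ : ℤ), 0 < k * (k - ℓ) → ℓ ≠ 0 →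
      ∀ t η ξ : ℝ,
        |(π - Real.arctan ((η - (k : ℝ) * t) / (K * (k : ℝ)))) -
            (π - Real.arctan ((η - ξ - ((k : ℝ) - (ℓ : ℝ)) * t) / (K * ((k : ℝ) - (ℓ : ℝ)))))| ≤
          C * (|ξ - (ℓ : ℝ) * t| + |(ℓ : ℝ)|) / min |(k : ℝ)| |(k : ℝ) - (ℓ : ℝ)| := by
  refine ⟨1, one_pos, ?_⟩
  intro K hK k ℓ hprod hℓ t η ξ
  have hK0 : (0:ℝ) < K := lt_of_lt_of_le one_pos hK
  set m : ℝ := min |(k:ℝ)| |(k:ℝ) - (ℓ:ℝ)| with hmdef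
  have hk0 : k ≠ 0 := by rintro rfl; simp at hprod
  have hkl0 : k - ℓ ≠ 0 := by
    intro h; rw [h] at hprod; simp at hprod
  have h1k : (1:ℝ) ≤ |(k:ℝ)| := by
    rw [← Int.cast_abs]; exact_mod_cast Int.one_le_abs hk0
  have h1kl : (1:ℝ) ≤ |(k:ℝ) - (ℓ:ℝ)| := by
    have h := Int.one_le_abs hkl0
    rw [show ((k:ℝ) - (ℓ:ℝ)) = ((k - ℓ : ℤ) : ℝ) by push_cast; ring, ← Int.cast_abs]
    exact_mod_cast h
  have hm1 : (1:ℝ) ≤ m := le_min h1k h1kl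
  have hm0 : (0:ℝ) < m := lt_of_lt_of_le one_pos hm1
  set u : ℝ := ξ - (ℓ:ℝ) * t with hu
  set b : ℝ := η - ξ - ((k:ℝ) - (ℓ:ℝ)) * t with hb
  set D : ℝ → ℝ := fun θ => ((k:ℝ) - (ℓ:ℝ)) + θ * (ℓ:ℝ) with hD
  set N : ℝ → ℝ := fun θ => b + θ * u with hN
  set g : ℝ → ℝ := fun θ => Real.arctan (N θ / (K * D θ)) with hg
  set G : ℝ → ℝ := fun θ =>
    (u * (K * D θ) - N θ * (K * (ℓ:ℝ))) / ((K * D θ) ^ 2 + N θ ^ 2) with hG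
  -- lower bound on |D θ|
  have hDm : ∀ θ ∈ Set.Icc (0:ℝ) 1, m ≤ |D θ| := by
    intro θ hθ
    obtain ⟨hθ0, hθ1⟩ := hθ
    rcases mul_pos_iff.mp hprod with ⟨hk, hkl⟩ | ⟨hk, hkl⟩
    · have hkR : (0:ℝ) < (k:ℝ) := by exact_mod_cast hk
      have hklR : (0:ℝ) < (k:ℝ) - (ℓ:ℝ) := by
        have : (0:ℝ) < ((k - ℓ : ℤ) : ℝ) := by exact_mod_cast hkl
        push_cast at this; linarith
      have hmk : m ≤ (k:ℝ) := (min_le_left _ _).trans (le_of_eq (abs_of_pos hkR))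
      have hmkl : m ≤ (k:ℝ) - (ℓ:ℝ) := (min_le_right _ _).trans (le_of_eq (abs_of_pos hklR))
      have : m ≤ D θ := by
        simp only [hD]
        nlinarith [mul_nonneg hθ0 (sub_nonneg.2 hmk),
          mul_nonneg (sub_nonneg.2 hθ1) (sub_nonneg.2 hmkl)]
      exact this.trans (le_abs_self _)
    · have hkR : (k:ℝ) < 0 := by exact_mod_cast hk
      have hklR : (k:ℝ) - (ℓ:ℝ) < 0 := by
        have : ((k - ℓ : ℤ) : ℝ) < 0 := by exact_mod_cast hkl
        push_cast at this; linarith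
      have hmk : m ≤ -(k:ℝ) := (min_le_left _ _).trans (le_of_eq (abs_of_neg hkR))
      have hmkl : m ≤ -((k:ℝ) - (ℓ:ℝ)) := (min_le_right _ _).trans (le_of_eq (abs_of_neg hklR))
      have : m ≤ -(D θ) := by
        simp only [hD]
        nlinarith [mul_nonneg hθ0 (sub_nonneg.2 hmk),
          mul_nonneg (sub_nonneg.2 hθ1) (sub_nonneg.2 hmkl)]
      exact this.trans (neg_le_abs _)
  -- derivative of g
  have hderiv : ∀ θ ∈ Set.Icc (0:ℝ) 1, HasDerivAt g (G θ) θ := by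
    intro θ hθ
    have hDθ : D θ ≠ 0 := by
      intro h
      have := hDm θ hθ
      rw [h, abs_zero] at this; linarith
    have hKD : K * D θ ≠ 0 := mul_ne_zero (ne_of_gt hK0) hDθ
    have hN' : HasDerivAt N u θ := by
      simpa [hN] using ((hasDerivAt_id θ).mul_const u).const_add b
    have hKD' : HasDerivAt (fun θ => K * D θ) (K * (ℓ:ℝ)) θ := by
      have : HasDerivAt D (ℓ:ℝ) θ := by
        simpa [hD] using ((hasDerivAt_id θ).mul_const (ℓ:ℝ)).const_add ((k:ℝ) - (ℓ:ℝ))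
      simpa using this.const_mul K
    have hq : HasDerivAt (fun θ => N θ / (K * D θ))
        ((u * (K * D θ) - N θ * (K * (ℓ:ℝ))) / (K * D θ) ^ 2) θ := hN'.div hKD' hKD
    have := (Real.hasDerivAt_arctan (N θ / (K * D θ))).comp θ hq
    refine this.congr_deriv ?_
    have hpos : (0:ℝ) < (K * D θ) ^ 2 + N θ ^ 2 := by positivity
    rw [hG]
    field_simp
  -- bound on derivative
  have hbound : ∀ θ ∈ Set.Icc (0:ℝ) 1, ‖G θ‖ ≤ (|u| + |(ℓ:ℝ)|) / m := by
    intro θ hθ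
    have hPm : K * m ≤ |K * D θ| := by
      rw [abs_mul, abs_of_pos hK0]
      exact mul_le_mul_of_nonneg_left (hDm θ hθ) (le_of_lt hK0)
    rw [Real.norm_eq_abs, hG]
    exact aux_arctan_deriv_bound hK hm0 hPm
  -- mean value theorem
  have hmvt := (convex_Icc (0:ℝ) 1).norm_image_sub_le_of_norm_hasDerivWithin_le
    (fun θ hθ => (hderiv θ hθ).hasDerivWithinAt) hbound
    (Set.left_mem_Icc.2 zero_le_one) (Set.right_mem_Icc.2 zero_le_one)
  simp only [Real.norm_eq_abs] at hmvt
  have hg1 : g 1 = Real.arctan ((η - (k:ℝ) * t) / (K * (k:ℝ))) := by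
    simp only [hg, hN, hD, hb, hu]
    ring_nf
  have hg0 : g 0 = Real.arctan ((η - ξ - ((k:ℝ) - (ℓ:ℝ)) * t) / (K * ((k:ℝ) - (ℓ:ℝ)))) := by
    simp only [hg, hN, hD, hb]
    ring_nf
  have hLHS : |(π - Real.arctan ((η - (k:ℝ) * t) / (K * (k:ℝ)))) -
      (π - Real.arctan ((η - ξ - ((k:ℝ) - (ℓ:ℝ)) * t) / (K * ((k:ℝ) - (ℓ:ℝ)))))| =
      |g 1 - g 0| := by
    rw [hg1, hg0, abs_sub_comm]
    ring_nf
  rw [hLHS, one_mul]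
  calc |g 1 - g 0| ≤ (|u| + |(ℓ:ℝ)|) / m * |(1:ℝ) - 0| := hmvt
    _ = (|ξ - (ℓ:ℝ) * t| + |(ℓ:ℝ)|) / m := by rw [hu]; norm_num
end

section
/- Let K ≥ 1, t ∈ ℝ, k an integer, η real, and define W_E(t,k,η) = π + (1/π²) Σ_{ℓ ∈ ℤ∖{0}} (1/ℓ²)·(ℓ/|ℓ|)·arctan((η − ℓt)/(K(1 + |k−ℓ| + |ℓ|))). Then W_E is differentiable in t and −∂_t W_E(t,k,η) ≥ (1/π²) Σ_{ℓ≠0} (1/|ℓ|) · (1 + |k−ℓ| + |ℓ|) / (K(1 + |k−ℓ| + |ℓ|)² + K^(−1)(η − ℓt)²) > 0. -/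
open Real

/-- The echo-cascade multiplier `W_E(t, k, η)` of Wei–Zhao. -/
noncomputable def WE (K : ℝ) (k : ℤ) (η : ℝ) (t : ℝ) : ℝ :=
  π + (1 / π ^ 2) * ∑' ℓ : {ℓ : ℤ // ℓ ≠ 0},
    (1 / ((ℓ : ℤ) : ℝ) ^ 2) * (((ℓ : ℤ) : ℝ) / |((ℓ : ℤ) : ℝ)|) *
      Real.arctan ((η - ((ℓ : ℤ) : ℝ) * t) /
        (K * (1 + |(k : ℝ) - ((ℓ : ℤ) : ℝ)| + |((ℓ : ℤ) : ℝ)|)))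

/-- The lower bound for `-∂ₜ W_E`. -/
noncomputable def WEsum (K : ℝ) (k : ℤ) (η : ℝ) (t : ℝ) : ℝ :=
  (1 / π ^ 2) * ∑' ℓ : {ℓ : ℤ // ℓ ≠ 0},
    (1 / |((ℓ : ℤ) : ℝ)|) * (1 + |(k : ℝ) - ((ℓ : ℤ) : ℝ)| + |((ℓ : ℤ) : ℝ)|) /
      (K * (1 + |(k : ℝ) - ((ℓ : ℤ) : ℝ)| + |((ℓ : ℤ) : ℝ)|) ^ 2 +
        K⁻¹ * (η - ((ℓ : ℤ) : ℝ) * t) ^ 2)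

namespace EchoAux

/-- the individual term of `WE` -/
noncomputable def f (K : ℝ) (k : ℤ) (η : ℝ) (ℓ : {ℓ : ℤ // ℓ ≠ 0}) (t : ℝ) : ℝ :=
  (1 / ((ℓ : ℤ) : ℝ) ^ 2) * (((ℓ : ℤ) : ℝ) / |((ℓ : ℤ) : ℝ)|) *
      Real.arctan ((η - ((ℓ : ℤ) : ℝ) * t) /
        (K * (1 + |(k : ℝ) - ((ℓ : ℤ) : ℝ)| + |((ℓ : ℤ) : ℝ)|)))

/-- the individual term of `WEsum` -/
noncomputable def g (K : ℝ) (k : ℤ) (η : ℝ) (ℓ : {ℓ : ℤ // ℓ ≠ 0}) (t : ℝ) : ℝ :=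
  (1 / |((ℓ : ℤ) : ℝ)|) * (1 + |(k : ℝ) - ((ℓ : ℤ) : ℝ)| + |((ℓ : ℤ) : ℝ)|) /
      (K * (1 + |(k : ℝ) - ((ℓ : ℤ) : ℝ)| + |((ℓ : ℤ) : ℝ)|) ^ 2 +
        K⁻¹ * (η - ((ℓ : ℤ) : ℝ) * t) ^ 2)

variable {K : ℝ} (hK : 1 ≤ K) {k : ℤ} {η t : ℝ}

lemma labs_pos (ℓ : {ℓ : ℤ // ℓ ≠ 0}) : (0:ℝ) < |((ℓ : ℤ) : ℝ)| := by
  have : ((ℓ : ℤ) : ℝ) ≠ 0 := Int.cast_ne_zero.mpr ℓ.2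
  positivity

lemma d_pos (ℓ : {ℓ : ℤ // ℓ ≠ 0}) :
    (0:ℝ) < 1 + |(k : ℝ) - ((ℓ : ℤ) : ℝ)| + |((ℓ : ℤ) : ℝ)| := by positivity

include hK in
lemma denom_pos (ℓ : {ℓ : ℤ // ℓ ≠ 0}) :
    0 < K * (1 + |(k : ℝ) - ((ℓ : ℤ) : ℝ)| + |((ℓ : ℤ) : ℝ)|) ^ 2 +
        K⁻¹ * (η - ((ℓ : ℤ) : ℝ) * t) ^ 2 := by
  have hK0 : (0:ℝ) < K := lt_of_lt_of_le one_pos hK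
  have := d_pos (k := k) ℓ
  positivity

include hK in
lemma g_pos (ℓ : {ℓ : ℤ // ℓ ≠ 0}) : 0 < g K k η ℓ t := by
  have h1 := labs_pos ℓ
  have h2 := d_pos (k := k) ℓ
  have h3 := denom_pos hK (k := k) (η := η) (t := t) ℓ
  rw [g]
  exact div_pos (mul_pos (by positivity) h2) h3

include hK in
lemma hasDerivAt_f (ℓ : {ℓ : ℤ // ℓ ≠ 0}) (y : ℝ) :
    HasDerivAt (f K k η ℓ) (-(g K k η ℓ y)) y := by
  have hK0 : (0:ℝ) < K := lt_of_lt_of_le one_pos hK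
  set L : ℝ := ((ℓ : ℤ) : ℝ) with hL
  have hLne : L ≠ 0 := Int.cast_ne_zero.mpr ℓ.2
  set d : ℝ := 1 + |(k : ℝ) - L| + |L| with hd
  have hdpos : 0 < d := d_pos (k := k) ℓ
  have hDpos : 0 < K * d := mul_pos hK0 hdpos
  have h1 : HasDerivAt (fun y : ℝ => (η - L * y) / (K * d)) (-L / (K * d)) y := by
    have : HasDerivAt (fun y : ℝ => η - L * y) (-L) y := by
      simpa using ((hasDerivAt_id y).const_mul L).const_sub η
    simpa using this.div_const (K * d)
  have h2 := (h1.arctan).const_mul ((1 / L ^ 2) * (L / |L|))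
  refine HasDerivAt.congr_deriv h2 ?_
  symm
  rw [g, ← hL, ← hd]
  have habsne : |L| ≠ 0 := ne_of_gt (abs_pos.mpr hLne)
  have hden : (1:ℝ) + ((η - L * y) / (K * d)) ^ 2 ≠ 0 := by positivity
  field_simp

include hK in
lemma norm_bound (ℓ : {ℓ : ℤ // ℓ ≠ 0}) (y : ℝ) :
    ‖-(g K k η ℓ y)‖ ≤ 1 / ((ℓ : ℤ) : ℝ) ^ 2 := by
  have hK0 : (0:ℝ) < K := lt_of_lt_of_le one_pos hK
  set L : ℝ := ((ℓ : ℤ) : ℝ) with hL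
  have hLpos : 0 < |L| := labs_pos ℓ
  set d : ℝ := 1 + |(k : ℝ) - L| + |L| with hd
  have hdpos : 0 < d := d_pos (k := k) ℓ
  have hdge : |L| ≤ d := by rw [hd]; nlinarith [abs_nonneg ((k:ℝ) - L)]
  have hden : 0 < K * d ^ 2 + K⁻¹ * (η - L * y) ^ 2 := denom_pos hK ℓ
  rw [norm_neg, Real.norm_eq_abs, abs_of_pos (g_pos hK ℓ)]
  rw [g, ← hL, ← hd]
  have hLne : L ≠ 0 := Int.cast_ne_zero.mpr ℓ.2
  rw [div_le_div_iff₀ hden (by positivity)]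
  have h1 : 1 / |L| * d * L ^ 2 = |L| * d := by
    field_simp
    linear_combination (-1) * sq_abs L
  rw [h1]
  have h2 : |L| * d ≤ K * d ^ 2 := by nlinarith
  have h3 : L ^ 2 = |L| ^ 2 := (sq_abs L).symm
  nlinarith [sq_nonneg (η - L * y), inv_pos.mpr hK0, mul_nonneg (abs_nonneg ((k:ℝ) - L)) (sq_nonneg L), mul_nonneg (abs_nonneg ((k:ℝ) - L)) (sq_nonneg |L|)]

lemma summable_u : Summable (fun ℓ : {ℓ : ℤ // ℓ ≠ 0} => 1 / ((ℓ : ℤ) : ℝ) ^ 2) :=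
  (summable_one_div_int_pow.mpr one_lt_two).subtype _

include hK in
lemma summable_f (y : ℝ) : Summable (fun ℓ : {ℓ : ℤ // ℓ ≠ 0} => f K k η ℓ y) := by
  apply (summable_u.mul_right (π / 2)).of_norm_bounded
  intro ℓ
  set L : ℝ := ((ℓ : ℤ) : ℝ) with hL
  have hLpos : 0 < |L| := labs_pos ℓ
  have hLne : L ≠ 0 := Int.cast_ne_zero.mpr ℓ.2
  have h1 : abs (L / |L|) = 1 := by rw [abs_div, abs_abs, div_self (ne_of_gt hLpos)]
  have h2 : abs (1 / L ^ 2) = 1 / L ^ 2 := abs_of_pos (by positivity)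
  rw [f, Real.norm_eq_abs, ← hL, abs_mul, abs_mul, h1, h2, mul_one]
  exact mul_le_mul_of_nonneg_left (le_of_lt (abs_lt.mpr ⟨neg_pi_div_two_lt_arctan _, arctan_lt_pi_div_two _⟩)) (by positivity)

include hK in
lemma summable_g (y : ℝ) : Summable (fun ℓ : {ℓ : ℤ // ℓ ≠ 0} => g K k η ℓ y) := by
  apply summable_u.of_norm_bounded
  intro ℓ
  simpa using norm_bound hK (η := η) ℓ y

include hK in
lemma hasDerivAt_WE :
    HasDerivAt (WE K k η) (-(WEsum K k η t)) t := by
  have h := hasDerivAt_tsum (g := fun ℓ (y : ℝ) => f K k η ℓ y)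
    (g' := fun ℓ (y : ℝ) => -(g K k η ℓ y)) summable_u
    (fun ℓ y => hasDerivAt_f hK ℓ y) (fun ℓ y => norm_bound hK ℓ y)
    (summable_f hK (0 : ℝ)) t
  have h2 := (h.const_mul (1 / π ^ 2)).const_add π
  have hsum : ∑' ℓ : {ℓ : ℤ // ℓ ≠ 0}, -(g K k η ℓ t)
      = -(∑' ℓ : {ℓ : ℤ // ℓ ≠ 0}, g K k η ℓ t) := tsum_neg
  rw [hsum] at h2
  have h3 : (1 / π ^ 2) * -(∑' ℓ : {ℓ : ℤ // ℓ ≠ 0}, g K k η ℓ t)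
      = -((1 / π ^ 2) * ∑' ℓ : {ℓ : ℤ // ℓ ≠ 0}, g K k η ℓ t) := by ring
  rw [h3] at h2
  exact h2

include hK in
lemma WEsum_pos : 0 < WEsum K k η t := by
  have hsg : Summable (fun ℓ : {ℓ : ℤ // ℓ ≠ 0} => g K k η ℓ t) := summable_g hK t
  have hpos : 0 < ∑' ℓ : {ℓ : ℤ // ℓ ≠ 0}, g K k η ℓ t :=
    Summable.tsum_pos hsg (fun ℓ => (g_pos hK ℓ).le) ⟨1, one_ne_zero⟩ (g_pos hK _)
  have hπ : (0:ℝ) < π := Real.pi_pos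
  show 0 < (1 / π ^ 2) * ∑' ℓ : {ℓ : ℤ // ℓ ≠ 0}, g K k η ℓ t
  positivity

end EchoAux

theorem echo_multiplier_time_derivative (K : ℝ) (hK : 1 ≤ K) (k : ℤ) (η t : ℝ) :
    DifferentiableAt ℝ (WE K k η) t ∧
    WEsum K k η t ≤ - deriv (WE K k η) t ∧
    0 < WEsum K k η t := by
  have h := EchoAux.hasDerivAt_WE hK (k := k) (η := η) (t := t)
  refine ⟨h.differentiableAt, ?_, EchoAux.WEsum_pos hK⟩
  rw [h.deriv, neg_neg]
end
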